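/- Let R be a ring, S a left Ore multiplicative subset, and M₁ ⊂ M₂ R-modules on which every element of S acts injectively, such that M₂/M₁ is simple. Then every element of S acts injectively on M₂/M₁ if and only if S⁻¹M₁ ≠ S⁻¹M₂ (as submodules of S⁻¹M₂). -/

import Mathlib

open OreLocalization

/-- The canonical map `M → S⁻¹M`, `m ↦ m /ₒ 1`, as an `R`-linear map. -/
noncomputable def oreLocMap (R : Type*) [Ring R] (S : Submonoid R) [OreLocalization.OreSet S]
    (M : Type*) [AddCommGroup M] [Module R M] : M →ₗ[R] M[S⁻¹] where
  toFun m := m /ₒ (1 : S)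
  map_add' m m' := add_oreDiv.symm
  map_smul' r m := by
    rw [RingHom.id_apply, ← smul_one_oreDiv_one_smul,
      oreDiv_smul_char (r • (1 : R)) m 1 1 r 1 (by simp)]
    simp

/-- The localization `S⁻¹N` of a submodule `N ⊆ M`, as the `R`-submodule of `S⁻¹M`
generated by the fractions `n /ₒ s` with `n ∈ N`, `s ∈ S`. -/
noncomputable def oreLocSub {R : Type*} [Ring R] {S : Submonoid R} [OreLocalization.OreSet S]
    {M : Type*} [AddCommGroup M] [Module R M] (N : Submodule R M) : Submodule R M[S⁻¹] :=
  Submodule.span R {x : M[S⁻¹] | ∃ n ∈ N, ∃ s : S, x = n /ₒ s}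


section Aux

variable {R : Type*} [Ring R] {S : Submonoid R} [OreLocalization.OreSet S]
    {M : Type*} [AddCommGroup M] [Module R M]

/-- The set of fractions with numerator in `N` is a submodule, hence equals its span. -/
lemma mem_fracSet_of_mem_span {N : Submodule R M} {x : M[S⁻¹]}
    (hx : x ∈ Submodule.span R {x : M[S⁻¹] | ∃ n ∈ N, ∃ s : S, x = n /ₒ s}) :
    ∃ n ∈ N, ∃ s : S, x = n /ₒ s := by
  refine Submodule.span_induction (fun x hx => hx) ⟨0, N.zero_mem, 1, by
      rw [OreLocalization.zero_def]⟩ ?_ ?_ hx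
  · rintro x y - - ⟨n, hn, s, rfl⟩ ⟨n', hn', s', rfl⟩
    obtain ⟨r'', s'', h, h'⟩ := oreDivAddChar' n n' s s'
    exact ⟨s'' • n + r'' • n', N.add_mem (N.smul_of_tower_mem s'' hn) (N.smul_mem r'' hn'),
      s'' * s, h'⟩
  · rintro r x - ⟨n, hn, s, rfl⟩
    rw [smul_oreDiv]
    exact ⟨_, N.smul_mem _ hn, _, rfl⟩

end Aux

/-- for submodules `M₁ ⊂ M₂` with simple quotient, on which every element of `S`
acts injectively, every element of `S` acts injectively on `M₂/M₁` if and only if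
`S⁻¹M₁ ≠ S⁻¹M₂` as submodules of `S⁻¹M₂`. -/
theorem stmt4 {R : Type*} [Ring R] {S : Submonoid R} [OreLocalization.OreSet S]
    {M₂ : Type*} [AddCommGroup M₂] [Module R M₂]
    (hinj : ∀ s : S, Function.Injective fun m : M₂ => (s : R) • m)
    (N : Submodule R M₂) (hN : N < ⊤) (hsimple : IsSimpleModule R (M₂ ⧸ N)) :
    (∀ s : S, Function.Injective fun x : M₂ ⧸ N => (s : R) • x) ↔
      oreLocSub (S := S) N ≠ oreLocSub (S := S) (⊤ : Submodule R M₂) := by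
  constructor
  · intro hq heq
    -- pick m ∉ N
    obtain ⟨m, -, hm⟩ := SetLike.exists_of_lt hN
    have hmem : (m /ₒ (1 : S) : M₂[S⁻¹]) ∈ oreLocSub (S := S) N := by
      rw [heq]
      exact Submodule.subset_span ⟨m, trivial, 1, rfl⟩
    obtain ⟨n, hn, s, hns⟩ := mem_fracSet_of_mem_span hmem
    rw [oreDiv_eq_iff] at hns
    obtain ⟨u, v, h1, h2⟩ := hns
    rw [Submonoid.coe_one, mul_one] at h2
    -- v = u * s ∈ S, and v • m = u • n ∈ N
    have hvS : v ∈ S := h2 ▸ (u * s).2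
    have hvm : v • m ∈ N := by
      rw [← h1, Submonoid.smul_def]; exact N.smul_mem _ hn
    have := hq ⟨v, hvS⟩ (a₁ := Submodule.Quotient.mk m) (a₂ := 0) (by
      simp only [smul_zero]
      rw [← Submodule.Quotient.mk_smul, Submodule.Quotient.mk_eq_zero]
      exact hvm)
    rw [Submodule.Quotient.mk_eq_zero] at this
    exact hm this
  · intro hne
    by_contra hq
    apply hne
    -- some s kills a nonzero element of the quotient
    simp only [Function.Injective, not_forall] at hq
    obtain ⟨s, x, y, hxy, hne'⟩ := hq
    obtain ⟨m, hmk⟩ := Submodule.Quotient.mk_surjective N (x - y)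
    have hm : m ∉ N := fun h => hne' (by
      rw [← sub_eq_zero, ← hmk, Submodule.Quotient.mk_eq_zero]
      exact h)
    have hsm : (s : R) • m ∈ N := by
      rw [← Submodule.Quotient.mk_eq_zero, Submodule.Quotient.mk_smul, hmk,
        smul_sub, sub_eq_zero]
      exact hxy
    -- claim: every m' is killed by some element of S modulo N
    have key : ∀ m' : M₂, ∃ v : S, (v : R) • m' ∈ N := by
      intro m'
      have hz : (Submodule.Quotient.mk m : M₂ ⧸ N) ≠ 0 := by
        rwa [Ne, Submodule.Quotient.mk_eq_zero]
      have hspan : Submodule.span R {(Submodule.Quotient.mk m : M₂ ⧸ N)} = ⊤ := by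
        rcases hsimple.1.2 (Submodule.span R {(Submodule.Quotient.mk m : M₂ ⧸ N)}) with h | h
        · exact absurd (Submodule.span_singleton_eq_bot.mp h) hz
        · exact h
      have : (Submodule.Quotient.mk m' : M₂ ⧸ N) ∈
          Submodule.span R {(Submodule.Quotient.mk m : M₂ ⧸ N)} := hspan ▸ trivial
      obtain ⟨r, hr⟩ := Submodule.mem_span_singleton.mp this
      obtain ⟨r', s', hos⟩ := oreCondition (S := S) r s
      refine ⟨s', ?_⟩
      have h0 : (s : R) • (Submodule.Quotient.mk m : M₂ ⧸ N) = 0 := by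
        rw [← Submodule.Quotient.mk_smul, Submodule.Quotient.mk_eq_zero]
        exact hsm
      rw [← Submodule.Quotient.mk_eq_zero, Submodule.Quotient.mk_smul, ← hr,
        smul_smul, hos, ← smul_smul, h0, smul_zero]
    -- conclude equality of the two localized submodules
    refine le_antisymm (Submodule.span_mono (fun x ⟨n, hn, s, h⟩ => ⟨n, trivial, s, h⟩)) ?_
    rw [oreLocSub, Submodule.span_le]
    rintro x ⟨m', -, t, rfl⟩
    obtain ⟨v, hv⟩ := key m'
    rw [OreLocalization.expand' m' t v]
    exact Submodule.subset_span ⟨v • m', by rwa [Submonoid.smul_def], v * t, rfl⟩
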